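/- Let A be an ℕ-graded ring with A₀ its degree-zero subring, and let P be a finitely generated ℤ-graded projective right A-module. Then P is isomorphic, as a graded A-module, to (P/P·A₊) ⊗_{A₀} A, where A₊ = ⊕_{n>0} A_n and P/P·A₊ is regarded as a graded A₀-module. In particular every finitely generated graded projective module over an ℕ-graded ring is extended from its degree-zero subring. -/

import Mathlib

set_option synthInstance.maxHeartbeats 1000000
set_option maxHeartbeats 4000000
set_option linter.unusedSectionVars false

universe u
open DirectSum

/-- Universal property of `Q ⊗_{A₀} A` (for left modules, `A ⊗_{A₀} Q`). -/
def IsBaseChangeAlong (A : Type u) [Ring A] (A₀ : Subring A)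
    (Q : Type u) [AddCommGroup Q] [Module A₀ Q]
    (E : Type u) [AddCommGroup E] [Module A E] (ι : Q →ₗ[A₀] E) : Prop :=
  ∀ (N : Type u) [AddCommGroup N] [Module A N] (f : Q →ₗ[A₀] N),
    ∃! F : E →ₗ[A] N, ∀ q : Q, F (ι q) = f q

/-- The submodule `P·A₊` (for left modules: `A₊·P`), `A₊ = ⊕_{n>0} A_n`. -/
def posSMulSubmodule {A : Type u} [Ring A] (𝒜 : ℤ → AddSubgroup A)
    (P : Type u) [AddCommGroup P] [Module A P] : Submodule A P :=
  Submodule.span A {x : P | ∃ n : ℤ, 0 < n ∧ ∃ a ∈ 𝒜 n, ∃ p : P, x = a • p}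

namespace GPE

variable {M : Type u} [AddCommGroup M] (ℳ : ℤ → AddSubgroup M) [DirectSum.Decomposition ℳ]

/-- Projection onto the degree `n` component, as an additive map `M →+ M`. -/
noncomputable def proj (n : ℤ) : M →+ M :=
  AddMonoidHom.mk' (fun x => (DirectSum.decompose ℳ x n : M)) (fun x y => by
    show (DirectSum.decompose ℳ (x + y) n : M) = _
    rw [DirectSum.decompose_add]; rfl)

lemma proj_apply (n : ℤ) (x : M) : proj ℳ n x = (DirectSum.decompose ℳ x n : M) := rfl

lemma proj_mem (n : ℤ) (x : M) : proj ℳ n x ∈ ℳ n := (DirectSum.decompose ℳ x n).2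

lemma proj_same {n : ℤ} {x : M} (h : x ∈ ℳ n) : proj ℳ n x = x :=
  DirectSum.decompose_of_mem_same ℳ h

lemma proj_ne {m n : ℤ} {x : M} (h : x ∈ ℳ m) (hne : m ≠ n) : proj ℳ n x = 0 :=
  DirectSum.decompose_of_mem_ne ℳ h hne

lemma sum_proj [∀ (i : ℤ) (x : ℳ i), Decidable (x ≠ 0)] (x : M) :
    ∑ n ∈ (DirectSum.decompose ℳ x).support, proj ℳ n x = x :=
  DirectSum.sum_support_decompose ℳ x

lemma hom_induction (p : M → Prop) (h0 : p 0) (hadd : ∀ x y, p x → p y → p (x + y))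
    (hhom : ∀ (k : ℤ) (x : M), x ∈ ℳ k → p x) : ∀ x, p x :=
  DirectSum.Decomposition.inductionOn ℳ h0 (fun {i} m => hhom i m m.2) hadd

variable {A : Type u} [Ring A] (𝒜 : ℤ → AddSubgroup A) [GradedRing 𝒜]

lemma proj_smul [Module A M] [SetLike.GradedSMul 𝒜 ℳ] {i : ℤ} {a : A} (ha : a ∈ 𝒜 i)
    (k : ℤ) (x : M) : proj ℳ (i + k) (a • x) = a • proj ℳ k x := by
  induction x using GPE.hom_induction ℳ with
  | h0 => simp
  | hadd x y hx hy => rw [smul_add, map_add, hx, hy, map_add, smul_add]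
  | hhom m x hx =>
      have hax : a • x ∈ ℳ (i + m) := SetLike.GradedSMul.smul_mem ha hx
      by_cases hkm : k = m
      · subst hkm
        rw [proj_same ℳ hax, proj_same ℳ hx]
      · rw [proj_ne ℳ hax (by omega), proj_ne ℳ hx (by omega), smul_zero]

variable {M' : Type u} [AddCommGroup M'] (ℳ' : ℤ → AddSubgroup M') [DirectSum.Decomposition ℳ']

/-- Projection onto degree `n`, valued in the subgroup. -/
noncomputable def projTo (n : ℤ) : M →+ ℳ n :=
  AddMonoidHom.mk' (fun x => DirectSum.decompose ℳ x n) (fun x y => by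
    show DirectSum.decompose ℳ (x + y) n = _
    rw [DirectSum.decompose_add]; rfl)

/-- "Gradify" an additive map between two graded groups: the new map sends the degree `k`
component of `x` into degree `k` part of its image. -/
noncomputable def gradify (f : M →+ M') : M →+ M' :=
  ((DirectSum.coeAddMonoidHom ℳ').comp
    (DFinsupp.mapRange.addMonoidHom
      (fun k => (projTo ℳ' k).comp (f.comp (ℳ k).subtype)))).comp
    (DirectSum.decomposeAddEquiv ℳ).toAddMonoidHom

lemma gradify_of_mem (f : M →+ M') {k : ℤ} {x : M} (hx : x ∈ ℳ k) :
    gradify ℳ ℳ' f x = proj ℳ' k (f x) := by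
  unfold gradify
  simp only [AddMonoidHom.comp_apply]
  have hdec : (DirectSum.decomposeAddEquiv ℳ).toAddMonoidHom x
      = DFinsupp.single k ⟨x, hx⟩ := by
    have := DirectSum.decompose_of_mem ℳ hx
    exact this
  erw [hdec, DFinsupp.mapRange.addMonoidHom_apply, DFinsupp.mapRange_single]
  have h2 : (DFinsupp.single k ((projTo ℳ' k).comp (f.comp (ℳ k).subtype) ⟨x, hx⟩) :
      ⨁ i, ℳ' i) = DirectSum.of (fun i => ℳ' i) k _ := rfl
  rw [h2, DirectSum.coeAddMonoidHom_of]
  rfl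

section RingLemmas

lemma proj_of_neg (hsupp : ∀ n : ℤ, n < 0 → 𝒜 n = ⊥) {i : ℤ} (hi : i < 0) (a : A) : proj 𝒜 i a = 0 := by
  have h := proj_mem 𝒜 i a
  rw [hsupp i hi] at h
  simpa using h

lemma projZero_mul (hsupp : ∀ n : ℤ, n < 0 → 𝒜 n = ⊥) (a b : A) : proj 𝒜 0 (a * b) = proj 𝒜 0 a * proj 𝒜 0 b := by
  classical
  conv_lhs => rw [← sum_proj 𝒜 a, ← sum_proj 𝒜 b]
  rw [Finset.sum_mul]
  simp_rw [Finset.mul_sum]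
  rw [map_sum]
  simp_rw [map_sum]
  rw [Finset.sum_eq_single (0 : ℤ)]
  · rw [Finset.sum_eq_single (0 : ℤ)]
    · exact proj_same 𝒜 (by simpa using SetLike.mul_mem_graded (proj_mem 𝒜 0 a) (proj_mem 𝒜 0 b))
    · intro j hj hj0
      rcases lt_or_gt_of_ne hj0 with h | h
      · rw [proj_of_neg 𝒜 hsupp h b, mul_zero, map_zero]
      · exact proj_ne 𝒜 (SetLike.mul_mem_graded (proj_mem 𝒜 0 a) (proj_mem 𝒜 j b)) (by omega)
    · intro h0
      rw [DFinsupp.notMem_support_iff] at h0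
      have : proj 𝒜 0 b = 0 := by rw [proj_apply, h0]; rfl
      rw [this, mul_zero, map_zero]
  · intro i hi hi0
    apply Finset.sum_eq_zero
    intro j _
    rcases lt_or_gt_of_ne hi0 with h | h
    · rw [proj_of_neg 𝒜 hsupp h a, zero_mul, map_zero]
    · rcases lt_trichotomy j 0 with h' | h' | h'
      · rw [proj_of_neg 𝒜 hsupp h' b, mul_zero, map_zero]
      · subst h'
        exact proj_ne 𝒜 (SetLike.mul_mem_graded (proj_mem 𝒜 i a) (proj_mem 𝒜 0 b)) (by omega)
      · exact proj_ne 𝒜 (SetLike.mul_mem_graded (proj_mem 𝒜 i a) (proj_mem 𝒜 j b)) (by omega)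
  · intro h0
    rw [DFinsupp.notMem_support_iff] at h0
    have : proj 𝒜 0 a = 0 := by rw [proj_apply, h0]; rfl
    apply Finset.sum_eq_zero
    intro j _
    rw [this, zero_mul, map_zero]

end RingLemmas

section ModuleLemmas

variable [Module A M] [SetLike.GradedSMul 𝒜 ℳ]

lemma proj_smul_of_lt (hsupp : ∀ n : ℤ, n < 0 → 𝒜 n = ⊥) {d₀ : ℤ} {y : M} (hy : ∀ m : ℤ, m < d₀ → proj ℳ m y = 0)
    (a : A) {m : ℤ} (hm : m < d₀) : proj ℳ m (a • y) = 0 := by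
  classical
  conv_lhs => rw [← sum_proj 𝒜 a, ← sum_proj ℳ y, Finset.sum_smul]
  rw [map_sum]
  apply Finset.sum_eq_zero
  intro i _
  rw [Finset.smul_sum, map_sum]
  apply Finset.sum_eq_zero
  intro k hk
  rcases lt_or_ge i 0 with h | h
  · rw [proj_of_neg 𝒜 hsupp h a, zero_smul, map_zero]
  · rcases lt_or_ge k d₀ with h' | h'
    · rw [hy k h', smul_zero, map_zero]
    · have hmem : proj 𝒜 i a • proj ℳ k y ∈ ℳ (i + k) :=
        SetLike.GradedSMul.smul_mem (proj_mem 𝒜 i a) (proj_mem ℳ k y)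
      exact proj_ne ℳ hmem (by omega)

lemma lowBound (hsupp : ∀ n : ℤ, n < 0 → 𝒜 n = ⊥) (X : Set M) (hspan : Submodule.span A X = ⊤) (d₀ : ℤ)
    (hX : ∀ x ∈ X, ∀ m : ℤ, m < d₀ → proj ℳ m x = 0) :
    ∀ m : ℤ, m < d₀ → ∀ x ∈ ℳ m, x = 0 := by
  have key : ∀ y : M, ∀ m : ℤ, m < d₀ → proj ℳ m y = 0 := by
    intro y
    have hy : y ∈ Submodule.span A X := by rw [hspan]; trivial
    induction hy using Submodule.span_induction with
    | mem x hx => exact hX x hx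
    | zero => intro m _; simp
    | add x y _ _ hx hy => intro m hm; rw [map_add, hx m hm, hy m hm, add_zero]
    | smul a x _ hx => intro m hm; exact proj_smul_of_lt ℳ 𝒜 hsupp hx a hm
  intro m hm x hx
  rw [← proj_same ℳ hx]
  exact key x m hm

lemma smul_mem_posClosure (hsupp : ∀ n : ℤ, n < 0 → 𝒜 n = ⊥) (b : A) {z : M}
    (hz : z ∈ AddSubgroup.closure {x : M | ∃ j k : ℤ, 0 < j ∧ ∃ a ∈ 𝒜 j, ∃ p ∈ ℳ k, x = a • p}) :
    b • z ∈ AddSubgroup.closure {x : M | ∃ j k : ℤ, 0 < j ∧ ∃ a ∈ 𝒜 j, ∃ p ∈ ℳ k, x = a • p} := by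
  classical
  induction hz using AddSubgroup.closure_induction with
  | mem z hz =>
      obtain ⟨j, k, hj, a, ha, p, hp, rfl⟩ := hz
      rw [smul_smul]
      have : (b * a) • p = ∑ i ∈ (DirectSum.decompose 𝒜 b).support,
          ((proj 𝒜 i b * a) • p) := by
        conv_lhs => rw [← sum_proj 𝒜 b, Finset.sum_mul, Finset.sum_smul]
      rw [this]
      refine AddSubgroup.sum_mem _ (fun i _ => ?_)
      rcases lt_or_ge i 0 with h | h
      · rw [proj_of_neg 𝒜 hsupp h b, zero_mul, zero_smul]; exact zero_mem _
      · exact AddSubgroup.subset_closure ⟨i + j, k, by omega,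
          proj 𝒜 i b * a, SetLike.mul_mem_graded (proj_mem 𝒜 i b) ha, p, hp, rfl⟩
  | zero => rw [smul_zero]; exact zero_mem _
  | add z w _ _ hz hw => rw [smul_add]; exact add_mem hz hw
  | neg z _ hz => rw [smul_neg]; exact neg_mem hz

lemma posSMul_eq_closure (hsupp : ∀ n : ℤ, n < 0 → 𝒜 n = ⊥) :
    (posSMulSubmodule 𝒜 M).toAddSubgroup =
      AddSubgroup.closure {x : M | ∃ j k : ℤ, 0 < j ∧ ∃ a ∈ 𝒜 j, ∃ p ∈ ℳ k, x = a • p} := by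
  classical
  apply le_antisymm
  · intro x hx
    rw [Submodule.mem_toAddSubgroup] at hx
    induction hx using Submodule.span_induction with
    | mem x hx =>
        obtain ⟨n, hn, a, ha, p, rfl⟩ := hx
        have : a • p = ∑ k ∈ (DirectSum.decompose ℳ p).support, a • proj ℳ k p := by
          conv_lhs => rw [← sum_proj ℳ p]
          rw [Finset.smul_sum]
        rw [this]
        exact AddSubgroup.sum_mem _ (fun k _ =>
          AddSubgroup.subset_closure ⟨n, k, hn, a, ha, proj ℳ k p, proj_mem ℳ k p, rfl⟩)
    | zero => exact zero_mem _
    | add x y _ _ hx hy => exact add_mem hx hy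
    | smul b x _ hx => exact smul_mem_posClosure ℳ 𝒜 hsupp b hx
  · rw [AddSubgroup.closure_le]
    rintro x ⟨j, k, hj, a, ha, p, hp, rfl⟩
    rw [SetLike.mem_coe, Submodule.mem_toAddSubgroup]
    exact Submodule.subset_span ⟨j, hj, a, ha, p, rfl⟩

lemma posSMul_proj_mem (hsupp : ∀ n : ℤ, n < 0 → 𝒜 n = ⊥) {x : M} (hx : x ∈ posSMulSubmodule 𝒜 M) (n : ℤ) :
    proj ℳ n x ∈ posSMulSubmodule 𝒜 M := by
  rw [← Submodule.mem_toAddSubgroup, posSMul_eq_closure ℳ 𝒜 hsupp] at hx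
  rw [← Submodule.mem_toAddSubgroup, posSMul_eq_closure ℳ 𝒜 hsupp]
  induction hx using AddSubgroup.closure_induction with
  | mem z hz =>
      obtain ⟨j, k, hj, a, ha, p, hp, rfl⟩ := hz
      have hmem : a • p ∈ ℳ (j + k) := SetLike.GradedSMul.smul_mem ha hp
      by_cases hn : j + k = n
      · subst hn; rw [proj_same ℳ hmem]
        exact AddSubgroup.subset_closure ⟨j, k, hj, a, ha, p, hp, rfl⟩
      · rw [proj_ne ℳ hmem hn]; exact zero_mem _
  | zero => rw [map_zero]; exact zero_mem _
  | add z w _ _ hz hw => rw [map_add]; exact add_mem hz hw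
  | neg z _ hz => rw [map_neg]; exact neg_mem hz

lemma posSMul_proj_le (hsupp : ∀ n : ℤ, n < 0 → 𝒜 n = ⊥) (d : ℤ) {z : M} (hz : z ∈ posSMulSubmodule 𝒜 M) :
    proj ℳ d z ∈ AddSubgroup.closure
      {x : M | ∃ j : ℤ, 0 < j ∧ ∃ a ∈ 𝒜 j, ∃ p ∈ ℳ (d - j), x = a • p} := by
  rw [← Submodule.mem_toAddSubgroup, posSMul_eq_closure ℳ 𝒜 hsupp] at hz
  induction hz using AddSubgroup.closure_induction with
  | mem w hw =>
      obtain ⟨j, k, hj, a, ha, p, hp, rfl⟩ := hw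
      have hmem : a • p ∈ ℳ (j + k) := SetLike.GradedSMul.smul_mem ha hp
      by_cases hn : j + k = d
      · rw [proj_same ℳ (hn ▸ hmem)]
        exact AddSubgroup.subset_closure ⟨j, hj, a, ha, p, by rw [show d - j = k by omega]; exact hp, rfl⟩
      · rw [proj_ne ℳ hmem hn]; exact zero_mem _
  | zero => rw [map_zero]; exact zero_mem _
  | add z w _ _ hz hw => rw [map_add]; exact add_mem hz hw
  | neg z _ hz => rw [map_neg]; exact neg_mem hz

lemma submodule_eq_top (hsupp : ∀ n : ℤ, n < 0 → 𝒜 n = ⊥) (M' : Submodule A M)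
    (hgr : ∀ (n : ℤ) (x : M), x ∈ M' → proj ℳ n x ∈ M')
    (hcov : ∀ p : M, ∃ m ∈ M', p - m ∈ posSMulSubmodule 𝒜 M)
    (d₀ : ℤ) (hlb : ∀ m : ℤ, m < d₀ → ∀ x ∈ ℳ m, x = 0) : M' = ⊤ := by
  classical
  have key : ∀ (k : ℕ) (d : ℤ), d < d₀ + k → ∀ x ∈ ℳ d, x ∈ M' := by
    intro k
    induction k with
    | zero =>
        intro d hd x hx
        rw [hlb d (by simpa using hd) x hx]
        exact zero_mem _
    | succ k ih =>
        intro d hd x hx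
        by_cases hdk : d < d₀ + k
        · exact ih d hdk x hx
        · obtain ⟨m, hm, hxm⟩ := hcov x
          have h1 : proj ℳ d m ∈ M' := hgr d m hm
          have h3 : proj ℳ d (x - m) ∈ M' := by
            have h2 := posSMul_proj_le ℳ 𝒜 hsupp d hxm
            have hle : AddSubgroup.closure
                {w : M | ∃ j : ℤ, 0 < j ∧ ∃ a ∈ 𝒜 j, ∃ p ∈ ℳ (d - j), w = a • p}
                ≤ M'.toAddSubgroup := by
              rw [AddSubgroup.closure_le]
              rintro w ⟨j, hj, a, ha, p, hp, rfl⟩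
              rw [SetLike.mem_coe, Submodule.mem_toAddSubgroup]
              exact M'.smul_mem a (ih (d - j) (by push_cast at hd ⊢; omega) p hp)
            exact hle h2
          have hx_eq : x = proj ℳ d m + proj ℳ d (x - m) := by
            rw [map_sub]
            rw [proj_same ℳ hx]
            abel
          rw [hx_eq]
          exact add_mem h1 h3
  rw [eq_top_iff]
  intro x _
  rw [← sum_proj ℳ x]
  refine Submodule.sum_mem _ (fun n _ => ?_)
  exact key (n - d₀ + 1).toNat n (by omega) _ (proj_mem ℳ n x)

end ModuleLemmas

end GPE


/-- Let `A` be an `ℕ`-graded ring (a `ℤ`-graded ring with support in `ℕ`) with degree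
zero subring `A₀`, and `P` a finitely generated `ℤ`-graded projective `A`-module. Then
`P ≅ (P/P·A₊) ⊗_{A₀} A` as graded `A`-modules, where `T(P) = P/P·A₊` carries its induced
grading; here the tensor product is encoded by any graded `A`-module `E` receiving a
degree-preserving `A₀`-linear map `ι` from `T(P)` and satisfying the universal property
of base change. In particular every finitely generated graded projective module over an
`ℕ`-graded ring is extended from its degree-zero subring. -/
theorem graded_projective_extended (A : Type u) [Ring A] (𝒜 : ℤ → AddSubgroup A)
    [GradedRing 𝒜] (hsupp : ∀ n : ℤ, n < 0 → 𝒜 n = ⊥)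
    (A₀ : Subring A) (hA₀ : (A₀ : Set A) = (𝒜 0 : Set A))
    (P : Type u) [AddCommGroup P] [Module A P] (ℳ : ℤ → AddSubgroup P)
    [DirectSum.Decomposition ℳ] [SetLike.GradedSMul 𝒜 ℳ]
    [Module.Finite A P] [Module.Projective A P]
    (E : Type u) [AddCommGroup E] [Module A E] (ℰ : ℤ → AddSubgroup E)
    [DirectSum.Decomposition ℰ] [SetLike.GradedSMul 𝒜 ℰ]
    (ι : (P ⧸ posSMulSubmodule 𝒜 P) →ₗ[A₀] E)
    (hι : ∀ (κ : ℤ) (x : P), x ∈ ℳ κ → ι (Submodule.Quotient.mk x) ∈ ℰ κ)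
    (hE : IsBaseChangeAlong A A₀ (P ⧸ posSMulSubmodule 𝒜 P) E ι) :
    ∃ e : E ≃ₗ[A] P,
      ∀ n : ℤ, (ℰ n).map e.toLinearMap.toAddMonoidHom = ℳ n := by
  classical
  -- Notation
  have hNdef : posSMulSubmodule 𝒜 P = posSMulSubmodule 𝒜 P := rfl
  have hA0 : ∀ a : A, a ∈ A₀ ↔ a ∈ 𝒜 0 := fun a => by
    constructor
    · intro h; rw [← SetLike.mem_coe, ← hA₀]; exact h
    · intro h; rw [← SetLike.mem_coe, hA₀]; exact h
  have hsubP : ∀ (c : A₀) (x : P), c • x = (c : A) • x := fun _ _ => rfl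
  have hsubE : ∀ (c : A₀) (x : E), c • x = (c : A) • x := fun _ _ => rfl
  have hsubT : ∀ (c : A₀) (x : P ⧸ (posSMulSubmodule 𝒜 P)), c • x = (c : A) • x := fun _ _ => rfl
  -- the canonical quotient maps
  have hmk_surj : Function.Surjective (Submodule.Quotient.mk : P → P ⧸ (posSMulSubmodule 𝒜 P)) :=
    Submodule.Quotient.mk_surjective (posSMulSubmodule 𝒜 P)
  let mkh : P →+ P ⧸ (posSMulSubmodule 𝒜 P) := (posSMulSubmodule 𝒜 P).mkQ.toAddMonoidHom
  have hmkh : ∀ p : P, mkh p = Submodule.Quotient.mk p := fun _ => rfl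
  let ιc : P →+ E := ι.toAddMonoidHom.comp mkh
  have hιc : ∀ p : P, ιc p = ι (Submodule.Quotient.mk p) := fun _ => rfl
  -- the projection of the ring to degree 0, denoted ρ below (as `proj 𝒜 0`)
  obtain ⟨σ, hσ⟩ := Module.projective_def.mp ‹Module.Projective A P›
  -- ψ : P → P, `ψ p = ∑ ρ(aₓ) • x` where `σ p = ∑ aₓ • x`
  let ψ : P →+ P := AddMonoidHom.mk' (fun p => (σ p).sum fun x a => GPE.proj 𝒜 0 a • x) (by
    intro p q
    show ((σ (p + q)).sum fun x a => GPE.proj 𝒜 0 a • x) = _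
    rw [map_add]
    exact Finsupp.sum_add_index' (fun x => by rw [map_zero, zero_smul])
      (fun x a b => by rw [map_add, add_smul]))
  have hψ_apply : ∀ p, ψ p = (σ p).sum fun x a => GPE.proj 𝒜 0 a • x := fun _ => rfl
  have hψ_smul : ∀ (b : A) (p : P), ψ (b • p) = GPE.proj 𝒜 0 b • ψ p := by
    intro b p
    rw [hψ_apply, hψ_apply, LinearMap.map_smul]
    rw [Finsupp.sum_smul_index' (fun x => by rw [map_zero, zero_smul])]
    rw [Finsupp.smul_sum]
    apply Finsupp.sum_congr
    intro x _
    rw [smul_eq_mul, GPE.projZero_mul 𝒜 hsupp, mul_smul]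
  have hkey_sub : ∀ (a : A) (x : P), (a - GPE.proj 𝒜 0 a) • x ∈ (posSMulSubmodule 𝒜 P) := by
    intro a x
    have ha : a - GPE.proj 𝒜 0 a
        = ∑ i ∈ (DirectSum.decompose 𝒜 a).support.erase 0, GPE.proj 𝒜 i a := by
      by_cases h0 : (0 : ℤ) ∈ (DirectSum.decompose 𝒜 a).support
      · have h := Finset.add_sum_erase _ (fun i => GPE.proj 𝒜 i a) h0
        rw [GPE.sum_proj 𝒜 a] at h
        exact (eq_sub_of_add_eq' h).symm
      · rw [Finset.erase_eq_of_notMem h0, GPE.sum_proj 𝒜 a]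
        have : GPE.proj 𝒜 0 a = 0 := by
          rw [GPE.proj_apply, DFinsupp.notMem_support_iff.mp h0]; rfl
        rw [this, sub_zero]
    rw [ha, Finset.sum_smul]
    refine Submodule.sum_mem _ fun i hi => ?_
    rw [Finset.mem_erase] at hi
    rcases lt_or_gt_of_ne hi.1 with h | h
    · rw [GPE.proj_of_neg 𝒜 hsupp h, zero_smul]; exact zero_mem _
    · exact Submodule.subset_span ⟨i, h, _, GPE.proj_mem 𝒜 i a, x, rfl⟩
  have hψ_sub : ∀ p : P, p - ψ p ∈ (posSMulSubmodule 𝒜 P) := by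
    intro p
    have hp : p - ψ p = (σ p).sum fun x a => (a - GPE.proj 𝒜 0 a) • x := by
      rw [hψ_apply]
      simp only [sub_smul]
      rw [Finsupp.sum_sub]
      congr 1
      conv_lhs => rw [← hσ p]
      rw [Finsupp.linearCombination_apply]
      rfl
    rw [hp, Finsupp.sum]
    exact Submodule.sum_mem _ fun x _ => hkey_sub _ x
  have hψ_zero : ∀ x ∈ (posSMulSubmodule 𝒜 P), ψ x = 0 := by
    intro x hx
    have hx' : x ∈ Submodule.span A {x : P | ∃ n : ℤ, 0 < n ∧ ∃ a ∈ 𝒜 n, ∃ p : P, x = a • p} := hx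
    clear hx
    induction hx' using Submodule.span_induction with
    | mem x hx =>
        obtain ⟨n, hn, a, ha, p, rfl⟩ := hx
        rw [hψ_smul, GPE.proj_ne 𝒜 ha (by omega), zero_smul]
    | zero => exact map_zero ψ
    | add x y _ _ hx hy => rw [map_add, hx, hy, add_zero]
    | smul b x _ hx => rw [hψ_smul, hx, smul_zero]
  -- χ : the gradified ψ
  set χ : P →+ P := GPE.gradify ℳ ℳ ψ with hχdef
  have hχ_hom : ∀ {k : ℤ} {x : P}, x ∈ ℳ k → χ x = GPE.proj ℳ k (ψ x) :=
    fun {k x} hx => GPE.gradify_of_mem ℳ ℳ ψ hx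
  have hχ_mem : ∀ {k : ℤ} {x : P}, x ∈ ℳ k → χ x ∈ ℳ k := by
    intro k x hx; rw [hχ_hom hx]; exact GPE.proj_mem ℳ k _
  have hχ_sub : ∀ p : P, χ p - p ∈ (posSMulSubmodule 𝒜 P) := by
    intro p
    induction p using GPE.hom_induction ℳ with
    | h0 => rw [map_zero, sub_zero]; exact zero_mem _
    | hadd x y hx hy =>
        have : χ (x + y) - (x + y) = (χ x - x) + (χ y - y) := by rw [map_add]; abel
        rw [this]; exact add_mem hx hy
    | hhom k x hx =>
        rw [hχ_hom hx]
        have : GPE.proj ℳ k (ψ x) - x = GPE.proj ℳ k (ψ x - x) := by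
          rw [map_sub, GPE.proj_same ℳ hx]
        rw [this]
        refine GPE.posSMul_proj_mem ℳ 𝒜 hsupp ?_ k
        have := hψ_sub x
        simpa using neg_mem this
  have hχ_mk : ∀ p : P, (Submodule.Quotient.mk (χ p) : P ⧸ (posSMulSubmodule 𝒜 P)) = Submodule.Quotient.mk p :=
    fun p => (Submodule.Quotient.eq (posSMulSubmodule 𝒜 P)).mpr (hχ_sub p)
  have hχ_zero : ∀ x ∈ (posSMulSubmodule 𝒜 P), χ x = 0 := by
    intro x hx
    rw [← Submodule.mem_toAddSubgroup, GPE.posSMul_eq_closure ℳ 𝒜 hsupp] at hx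
    induction hx using AddSubgroup.closure_induction with
    | mem z hz =>
        obtain ⟨j, k, hj, a, ha, p, hp, rfl⟩ := hz
        have hmem : a • p ∈ ℳ (j + k) := SetLike.GradedSMul.smul_mem ha hp
        rw [hχ_hom hmem, hψ_smul, GPE.proj_ne 𝒜 ha (by omega), zero_smul, map_zero]
    | zero => exact map_zero χ
    | add z w _ _ hz hw => rw [map_add, hz, hw, add_zero]
    | neg z _ hz => rw [map_neg, hz, neg_zero]
  have hχ_smul0 : ∀ (c : A), c ∈ 𝒜 0 → ∀ p : P, χ (c • p) = c • χ p := by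
    intro c hc p
    induction p using GPE.hom_induction ℳ with
    | h0 => rw [smul_zero, map_zero, smul_zero]
    | hadd x y hx hy => rw [smul_add, map_add, hx, hy, map_add, smul_add]
    | hhom k x hx =>
        have hcx : c • x ∈ ℳ k := by
          have := SetLike.GradedSMul.smul_mem hc hx
          rwa [show ((0 : ℤ) +ᵥ k) = k by simp] at this
        rw [hχ_hom hcx, hχ_hom hx, hψ_smul, GPE.proj_same 𝒜 hc]
        have := GPE.proj_smul ℳ 𝒜 hc k (ψ x)
        rwa [zero_add] at this
  have hχ_congr : ∀ p p' : P,
      (Submodule.Quotient.mk p : P ⧸ (posSMulSubmodule 𝒜 P)) = Submodule.Quotient.mk p' → χ p = χ p' := by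
    intro p p' h
    have hpp : p - p' ∈ (posSMulSubmodule 𝒜 P) := (Submodule.Quotient.eq (posSMulSubmodule 𝒜 P)).mp h
    have := hχ_zero _ hpp
    rw [map_sub] at this
    exact sub_eq_zero.mp this
  -- the graded `A₀`-linear section `s` of the quotient map
  have hχ_mk_eq : ∀ p : P, χ (Function.surjInv hmk_surj (Submodule.Quotient.mk p)) = χ p :=
    fun p => hχ_congr _ _ (Function.surjInv_eq hmk_surj _)
  let sfun : (P ⧸ (posSMulSubmodule 𝒜 P)) → P := fun t => χ (Function.surjInv hmk_surj t)
  have hsfun : ∀ p : P, sfun (Submodule.Quotient.mk p) = χ p := hχ_mk_eq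
  let s : (P ⧸ (posSMulSubmodule 𝒜 P)) →ₗ[A₀] P :=
    { toFun := sfun
      map_add' := by
        intro t t'
        obtain ⟨p, rfl⟩ := hmk_surj t
        obtain ⟨p', rfl⟩ := hmk_surj t'
        rw [← Submodule.Quotient.mk_add, hsfun, hsfun, hsfun, map_add]
      map_smul' := by
        intro c t
        obtain ⟨p, rfl⟩ := hmk_surj t
        have h1 : c • (Submodule.Quotient.mk p : P ⧸ (posSMulSubmodule 𝒜 P))
            = Submodule.Quotient.mk ((c : A) • p) := by
          rw [hsubT, Submodule.Quotient.mk_smul]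
        show sfun (c • (Submodule.Quotient.mk p : P ⧸ (posSMulSubmodule 𝒜 P))) = c • sfun (Submodule.Quotient.mk p)
        rw [h1, hsfun, hsfun, hχ_smul0 (c : A) ((hA0 _).mp c.2) p, hsubP] }
  have hs_apply : ∀ p : P, s (Submodule.Quotient.mk p) = χ p := hsfun
  have hs_sec : ∀ t : P ⧸ (posSMulSubmodule 𝒜 P), (Submodule.Quotient.mk (s t) : P ⧸ (posSMulSubmodule 𝒜 P)) = t := by
    intro t
    obtain ⟨p, rfl⟩ := hmk_surj t
    rw [hs_apply, hχ_mk]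
  have hs_gr : ∀ (k : ℤ) (p : P), p ∈ ℳ k → s (Submodule.Quotient.mk p) ∈ ℳ k := by
    intro k p hp
    rw [hs_apply]
    exact hχ_mem hp
  -- the base change map F : E → P
  obtain ⟨F, hF, hFuniq⟩ := hE P s
  -- E is spanned by the image of ι
  have hspanι : ∀ e : E, e ∈ Submodule.span A (Set.range ι) := by
    obtain ⟨F₀, hF₀, hF₀u⟩ := hE (E ⧸ Submodule.span A (Set.range ι))
      (0 : (P ⧸ (posSMulSubmodule 𝒜 P)) →ₗ[A₀] (E ⧸ Submodule.span A (Set.range ι)))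
    have h1 : (Submodule.span A (Set.range ι)).mkQ = F₀ := by
      apply hF₀u
      intro q
      rw [Submodule.mkQ_apply, LinearMap.zero_apply, Submodule.Quotient.mk_eq_zero]
      exact Submodule.subset_span ⟨q, rfl⟩
    have h2 : (0 : E →ₗ[A] E ⧸ Submodule.span A (Set.range ι)) = F₀ := by
      apply hF₀u
      intro q
      rw [LinearMap.zero_apply, LinearMap.zero_apply]
    intro e
    have : (Submodule.span A (Set.range ι)).mkQ e = 0 := by rw [h1, ← h2]; rfl
    rwa [Submodule.mkQ_apply, Submodule.Quotient.mk_eq_zero] at this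
  -- E is spanned by homogeneous images
  have hXE : Submodule.span A {x : E | ∃ (k : ℤ) (p : P), p ∈ ℳ k
      ∧ x = ι (Submodule.Quotient.mk p)} = ⊤ := by
    rw [eq_top_iff]
    intro e _
    refine Submodule.span_le.mpr ?_ (hspanι e)
    rintro x ⟨t, rfl⟩
    obtain ⟨p, rfl⟩ := hmk_surj t
    have hdec : ι (Submodule.Quotient.mk p)
        = ∑ k ∈ (DirectSum.decompose ℳ p).support, ιc (GPE.proj ℳ k p) := by
      rw [← map_sum ιc]
      conv_lhs => rw [← GPE.sum_proj ℳ p]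
      rfl
    rw [hdec]
    exact Submodule.sum_mem _ fun k _ =>
      Submodule.subset_span ⟨k, GPE.proj ℳ k p, GPE.proj_mem ℳ k p, (hιc _).symm⟩
  -- lower bound on degrees of P and E
  obtain ⟨ngen, g, hg⟩ := Module.Finite.exists_fin (R := A) (M := P)
  set D : Finset ℤ :=
    insert 0 (Finset.biUnion Finset.univ (fun i => (DirectSum.decompose ℳ (g i)).support))
    with hDdef
  have hD0 : (0 : ℤ) ∈ D := Finset.mem_insert_self _ _
  set d₀ : ℤ := D.min' ⟨0, hD0⟩ with hd₀def
  have hlbP : ∀ m : ℤ, m < d₀ → ∀ x ∈ ℳ m, x = 0 := by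
    refine GPE.lowBound ℳ 𝒜 hsupp (Set.range g) hg d₀ ?_
    rintro _ ⟨i, rfl⟩ m hm
    by_cases hmem : m ∈ (DirectSum.decompose ℳ (g i)).support
    · exfalso
      have : m ∈ D := Finset.mem_insert_of_mem (Finset.mem_biUnion.mpr ⟨i, Finset.mem_univ i, hmem⟩)
      exact absurd (D.min'_le m this) (by omega)
    · rw [GPE.proj_apply, DFinsupp.notMem_support_iff.mp hmem]; rfl
  have hlbE : ∀ m : ℤ, m < d₀ → ∀ x ∈ ℰ m, x = 0 := by
    refine GPE.lowBound ℰ 𝒜 hsupp _ hXE d₀ ?_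
    rintro x ⟨k, p, hp, rfl⟩ m hm
    by_cases hk : k < d₀
    · rw [hlbP k hk p hp]
      rw [show (Submodule.Quotient.mk (0 : P) : P ⧸ (posSMulSubmodule 𝒜 P)) = 0 from Submodule.Quotient.mk_zero (posSMulSubmodule 𝒜 P)]
      rw [map_zero, map_zero]
    · exact GPE.proj_ne ℰ (hι k p hp) (by omega)
  -- the homogeneous pieces of E are spanned by homogeneous products
  set C : ℤ → AddSubgroup E := fun n => AddSubgroup.closure
    {x : E | ∃ (j k : ℤ) (a : A) (p : P), j + k = n ∧ a ∈ 𝒜 j ∧ p ∈ ℳ k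
      ∧ x = a • ι (Submodule.Quotient.mk p)} with hCdef
  have hC_le : ∀ (n : ℤ) (x : E), x ∈ C n → x ∈ ℰ n := by
    intro n x hx
    refine AddSubgroup.closure_le (ℰ n) |>.mpr ?_ hx
    rintro y ⟨j, k, a, p, hjk, ha, hp, rfl⟩
    have : a • ι (Submodule.Quotient.mk p) ∈ ℰ (j + k) :=
      SetLike.GradedSMul.smul_mem ha (hι k p hp)
    rwa [hjk] at this
  have hC_smul : ∀ (i : ℤ) (a : A), a ∈ 𝒜 i → ∀ (n : ℤ) (x : E),
      x ∈ C n → a • x ∈ C (i + n) := by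
    intro i a ha n x hx
    induction hx using AddSubgroup.closure_induction with
    | mem z hz =>
        obtain ⟨j, k, b, p, hjk, hb, hp, rfl⟩ := hz
        rw [smul_smul]
        exact AddSubgroup.subset_closure
          ⟨i + j, k, a * b, p, by omega, SetLike.mul_mem_graded ha hb, hp, rfl⟩
    | zero => rw [smul_zero]; exact zero_mem _
    | add z w _ _ hz hw => rw [smul_add]; exact add_mem hz hw
    | neg z _ hz => rw [smul_neg]; exact neg_mem hz
  have hEC_key : ∀ (x : E) (m : ℤ), GPE.proj ℰ m x ∈ C m := by
    intro x
    have hx : x ∈ Submodule.span A {x : E | ∃ (k : ℤ) (p : P), p ∈ ℳ k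
        ∧ x = ι (Submodule.Quotient.mk p)} := by rw [hXE]; trivial
    induction hx using Submodule.span_induction with
    | mem x hx =>
        obtain ⟨k, p, hp, rfl⟩ := hx
        intro m
        have hxk : ι (Submodule.Quotient.mk p) ∈ ℰ k := hι k p hp
        have hxC : ι (Submodule.Quotient.mk p) ∈ C k := AddSubgroup.subset_closure
          ⟨0, k, 1, p, by omega, SetLike.one_mem_graded 𝒜, hp, (one_smul _ _).symm⟩
        by_cases hmk : k = m
        · subst hmk; rw [GPE.proj_same ℰ hxk]; exact hxC
        · rw [GPE.proj_ne ℰ hxk hmk]; exact zero_mem _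
    | zero => intro m; rw [map_zero]; exact zero_mem _
    | add x y _ _ hx hy => intro m; rw [map_add]; exact add_mem (hx m) (hy m)
    | smul a x _ hx =>
        intro m
        have hax : a • x = ∑ i ∈ (DirectSum.decompose 𝒜 a).support, GPE.proj 𝒜 i a • x := by
          conv_lhs => rw [← GPE.sum_proj 𝒜 a]
          rw [Finset.sum_smul]
        rw [hax, map_sum]
        refine AddSubgroup.sum_mem _ fun i _ => ?_
        have hax2 : GPE.proj 𝒜 i a • x
            = ∑ k ∈ (DirectSum.decompose ℰ x).support, GPE.proj 𝒜 i a • GPE.proj ℰ k x := by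
          conv_lhs => rw [← GPE.sum_proj ℰ x]
          rw [Finset.smul_sum]
        rw [hax2, map_sum]
        refine AddSubgroup.sum_mem _ fun k _ => ?_
        have h1 : GPE.proj 𝒜 i a • GPE.proj ℰ k x ∈ C (i + k) :=
          hC_smul i _ (GPE.proj_mem 𝒜 i a) k _ (hx k)
        have h2 : GPE.proj 𝒜 i a • GPE.proj ℰ k x ∈ ℰ (i + k) := hC_le _ _ h1
        by_cases hik : i + k = m
        · rw [← hik, GPE.proj_same ℰ h2]; exact h1
        · rw [GPE.proj_ne ℰ h2 hik]; exact zero_mem _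
  have hEC : ∀ (n : ℤ) (x : E), x ∈ ℰ n → x ∈ C n := by
    intro n x hx
    rw [← GPE.proj_same ℰ hx]
    exact hEC_key x n
  -- F is a graded map
  have hF_gr : ∀ (n : ℤ) (x : E), x ∈ ℰ n → F x ∈ ℳ n := by
    intro n x hx
    have hx' := hEC n x hx
    clear hx
    induction hx' using AddSubgroup.closure_induction with
    | mem z hz =>
        obtain ⟨j, k, a, p, hjk, ha, hp, rfl⟩ := hz
        rw [map_smul, hF]
        have : a • s (Submodule.Quotient.mk p) ∈ ℳ (j + k) :=
          SetLike.GradedSMul.smul_mem ha (hs_gr k p hp)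
        rwa [hjk] at this
    | zero => rw [map_zero]; exact zero_mem _
    | add z w _ _ hz hw => rw [map_add]; exact add_mem hz hw
    | neg z _ hz => rw [map_neg]; exact neg_mem hz
  have hF_proj : ∀ (n : ℤ) (x : E), F (GPE.proj ℰ n x) = GPE.proj ℳ n (F x) := by
    intro n x
    induction x using GPE.hom_induction ℰ with
    | h0 => rw [map_zero, map_zero, map_zero]
    | hadd x y hx hy => rw [map_add, map_add, hx, hy, map_add, map_add]
    | hhom m x hx =>
        have hFx : F x ∈ ℳ m := hF_gr m x hx
        by_cases hmn : m = n
        · subst hmn; rw [GPE.proj_same ℰ hx, GPE.proj_same ℳ hFx]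
        · rw [GPE.proj_ne ℰ hx hmn, GPE.proj_ne ℳ hFx hmn, map_zero]
  -- surjectivity of F (graded Nakayama)
  have hFsurj : Function.Surjective F := by
    rw [← LinearMap.range_eq_top]
    refine GPE.submodule_eq_top ℳ 𝒜 hsupp (LinearMap.range F) ?_ ?_ d₀ hlbP
    · rintro n x ⟨e, rfl⟩
      exact ⟨GPE.proj ℰ n e, hF_proj n e⟩
    · intro p
      refine ⟨F (ι (Submodule.Quotient.mk p)), ⟨_, rfl⟩, ?_⟩
      rw [hF]
      exact (Submodule.Quotient.eq _).mp (hs_sec (Submodule.Quotient.mk p)).symm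
  -- a graded section of F coming from projectivity of P
  obtain ⟨G₀, hG₀⟩ := Module.projective_lifting_property F LinearMap.id hFsurj
  have hG₀' : ∀ p : P, F (G₀ p) = p := fun p => by
    have := LinearMap.ext_iff.mp hG₀ p
    simpa using this
  set G' : P →+ E := GPE.gradify ℳ ℰ G₀.toAddMonoidHom with hG'def
  have hG'_hom : ∀ {k : ℤ} {p : P}, p ∈ ℳ k → G' p = GPE.proj ℰ k (G₀ p) :=
    fun {k p} hp => GPE.gradify_of_mem ℳ ℰ G₀.toAddMonoidHom hp
  have hFG' : ∀ p : P, F (G' p) = p := by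
    intro p
    induction p using GPE.hom_induction ℳ with
    | h0 => rw [map_zero, map_zero]
    | hadd x y hx hy => rw [map_add, map_add, hx, hy]
    | hhom k x hx => rw [hG'_hom hx, hF_proj, hG₀', GPE.proj_same ℳ hx]
  have hG'_gr : ∀ {k : ℤ} {p : P}, p ∈ ℳ k → G' p ∈ ℰ k := by
    intro k p hp
    rw [hG'_hom hp]
    exact GPE.proj_mem ℰ k _
  have hG'_smul : ∀ (a : A) (p : P), G' (a • p) = a • G' p := by
    have hhomc : ∀ (i : ℤ) (a : A), a ∈ 𝒜 i → ∀ p : P, G' (a • p) = a • G' p := by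
      intro i a ha p
      induction p using GPE.hom_induction ℳ with
      | h0 => rw [smul_zero, map_zero, smul_zero]
      | hadd x y hx hy => rw [smul_add, map_add, hx, hy, map_add, smul_add]
      | hhom k x hx =>
          have hax : a • x ∈ ℳ (i + k) := SetLike.GradedSMul.smul_mem ha hx
          rw [hG'_hom hax, hG'_hom hx, map_smul, GPE.proj_smul ℰ 𝒜 ha]
    intro a p
    have h1 : a • p = ∑ i ∈ (DirectSum.decompose 𝒜 a).support, GPE.proj 𝒜 i a • p := by
      conv_lhs => rw [← GPE.sum_proj 𝒜 a]
      rw [Finset.sum_smul]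
    have h2 : a • G' p = ∑ i ∈ (DirectSum.decompose 𝒜 a).support, GPE.proj 𝒜 i a • G' p := by
      conv_lhs => rw [← GPE.sum_proj 𝒜 a]
      rw [Finset.sum_smul]
    rw [h1, map_sum, h2]
    exact Finset.sum_congr rfl fun i _ => hhomc i _ (GPE.proj_mem 𝒜 i a) p
  -- injectivity, degree by degree
  have hinj_deg : ∀ (kk : ℕ) (d : ℤ), d < d₀ + kk → ∀ x ∈ ℰ d, F x = 0 → x = 0 := by
    intro kk
    induction kk with
    | zero => intro d hd x hx _; exact hlbE d (by simpa using hd) x hx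
    | succ k ih =>
        intro d hd x hx hFx
        by_cases hdk : d < d₀ + k
        · exact ih d hdk x hx hFx
        · have hxC := hEC d x hx
          set Dg : AddSubgroup E := AddSubgroup.closure
            {z : E | ∃ (j k' : ℤ) (a : A) (p : P), j + k' = d ∧ 0 < j ∧ a ∈ 𝒜 j ∧ p ∈ ℳ k'
              ∧ z = a • ι (Submodule.Quotient.mk p)} with hDgdef
          have hsplit : x ∈ (ℳ d).map ιc ⊔ Dg := by
            refine AddSubgroup.closure_le ((ℳ d).map ιc ⊔ Dg) |>.mpr ?_ hxC
            rintro z ⟨j, k', a, p, hjk, ha, hp, rfl⟩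
            rcases lt_trichotomy j 0 with hj | hj | hj
            · have ha0 : a = 0 := by
                have := ha
                rw [hsupp j hj] at this
                simpa using this
              rw [ha0, zero_smul]; exact zero_mem _
            · subst hj
              have haA0 : a ∈ A₀ := (hA0 a).mpr ha
              have hz_eq : a • ι (Submodule.Quotient.mk p) = ιc (a • p) := by
                rw [hιc, Submodule.Quotient.mk_smul]
                have h := map_smul ι (⟨a, haA0⟩ : A₀) (Submodule.Quotient.mk p)
                rw [hsubT, hsubE] at h
                exact h.symm
              rw [hz_eq]
              refine (le_sup_left : (ℳ d).map ιc ≤ _) ?_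
              refine AddSubgroup.mem_map.mpr ⟨a • p, ?_, rfl⟩
              have : a • p ∈ ℳ (0 + k') := SetLike.GradedSMul.smul_mem ha hp
              rwa [show (0 : ℤ) + k' = d by omega] at this
            · exact (le_sup_right : Dg ≤ _)
                (AddSubgroup.subset_closure ⟨j, k', a, p, hjk, hj, ha, hp, rfl⟩)
          obtain ⟨y, hy, z, hz, hyz⟩ := AddSubgroup.mem_sup.mp hsplit
          have hFz : ∀ w ∈ Dg, (Submodule.Quotient.mk (F w) : P ⧸ posSMulSubmodule 𝒜 P)
              = 0 := by
            intro w hw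
            induction hw using AddSubgroup.closure_induction with
            | mem u hu =>
                obtain ⟨j, k', a, p, hjk, hjpos, ha, hp, rfl⟩ := hu
                rw [map_smul, hF, Submodule.Quotient.mk_smul, hs_sec,
                  ← Submodule.Quotient.mk_smul, Submodule.Quotient.mk_eq_zero]
                exact Submodule.subset_span ⟨j, hjpos, a, ha, p, rfl⟩
            | zero => rw [map_zero, Submodule.Quotient.mk_zero]
            | add u v _ _ hu hv =>
                rw [map_add, Submodule.Quotient.mk_add, hu, hv, add_zero]
            | neg u _ hu => rw [map_neg, Submodule.Quotient.mk_neg, hu, neg_zero]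
          obtain ⟨p0, hp0, rfl⟩ := AddSubgroup.mem_map.mp hy
          have hmkp0 : (Submodule.Quotient.mk p0 : P ⧸ posSMulSubmodule 𝒜 P) = 0 := by
            have h2 : (Submodule.Quotient.mk (F (ιc p0)) : P ⧸ posSMulSubmodule 𝒜 P)
                = Submodule.Quotient.mk p0 := by
              rw [hιc, hF, hs_sec]
            calc (Submodule.Quotient.mk p0 : P ⧸ posSMulSubmodule 𝒜 P)
                = Submodule.Quotient.mk (F (ιc p0)) := h2.symm
              _ = Submodule.Quotient.mk (F (ιc p0)) + Submodule.Quotient.mk (F z) := by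
                  rw [hFz z hz, add_zero]
              _ = Submodule.Quotient.mk (F (ιc p0 + z)) := by
                  rw [map_add, Submodule.Quotient.mk_add]
              _ = Submodule.Quotient.mk (F x) := by rw [hyz]
              _ = 0 := by rw [hFx, Submodule.Quotient.mk_zero]
          have hy0 : ιc p0 = 0 := by
            rw [hιc, hmkp0, map_zero]
          have hxz : x = z := by rw [← hyz, hy0, zero_add]
          have hkill : ∀ w ∈ Dg, w - G' (F w) = 0 := by
            intro w hw
            induction hw using AddSubgroup.closure_induction with
            | mem u hu =>
                obtain ⟨j, k', a, p, hjk, hjpos, ha, hp, rfl⟩ := hu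
                have hw0 : ι (Submodule.Quotient.mk p) ∈ ℰ k' := hι k' p hp
                have heq : a • ι (Submodule.Quotient.mk p)
                      - G' (F (a • ι (Submodule.Quotient.mk p)))
                    = a • (ι (Submodule.Quotient.mk p)
                      - G' (F (ι (Submodule.Quotient.mk p)))) := by
                  rw [map_smul, hG'_smul, smul_sub]
                rw [heq]
                have hmem2 : ι (Submodule.Quotient.mk p)
                    - G' (F (ι (Submodule.Quotient.mk p))) ∈ ℰ k' :=
                  sub_mem hw0 (hG'_gr (hF_gr k' _ hw0))
                have hF2 : F (ι (Submodule.Quotient.mk p)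
                    - G' (F (ι (Submodule.Quotient.mk p)))) = 0 := by
                  rw [map_sub, hFG', sub_self]
                have hres := ih k' (by omega) _ hmem2 hF2
                rw [hres, smul_zero]
            | zero => rw [map_zero, map_zero, sub_zero]
            | add u v _ _ hu hv =>
                rw [map_add, map_add, add_sub_add_comm, hu, hv, add_zero]
            | neg u _ hu =>
                have h3 : -u - G' (F (-u)) = -(u - G' (F u)) := by
                  rw [map_neg, map_neg]; abel
                rw [h3, hu, neg_zero]
          have h5 := hkill z hz
          rw [← hxz] at h5
          rw [hFx, map_zero, sub_zero] at h5
          exact h5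
  have hFinj : Function.Injective F := by
    have hker : ∀ x : E, F x = 0 → x = 0 := by
      intro x hx
      have hcomp : ∀ n : ℤ, GPE.proj ℰ n x = 0 := by
        intro n
        refine hinj_deg (n - d₀ + 1).toNat n (by omega) _ (GPE.proj_mem ℰ n x) ?_
        rw [hF_proj, hx, map_zero]
      rw [← GPE.sum_proj ℰ x]
      exact Finset.sum_eq_zero fun n _ => hcomp n
    intro x y hxy
    have h1 : F (x - y) = 0 := by rw [map_sub, hxy, sub_self]
    exact sub_eq_zero.mp (hker _ h1)
  -- conclusion
  refine ⟨LinearEquiv.ofBijective F ⟨hFinj, hFsurj⟩, fun n => ?_⟩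
  apply le_antisymm
  · intro y hy
    rw [AddSubgroup.mem_map] at hy
    obtain ⟨x, hx, rfl⟩ := hy
    exact hF_gr n x hx
  · intro y hy
    obtain ⟨x, hxy⟩ := hFsurj y
    refine AddSubgroup.mem_map.mpr ⟨GPE.proj ℰ n x, GPE.proj_mem ℰ n x, ?_⟩
    show F (GPE.proj ℰ n x) = y
    rw [hF_proj, hxy, GPE.proj_same ℳ hy]
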